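/- Let R = k[X] × k for a field k, and C = {(f, f(1)) : f ∈ k[X]} ⊆ R. Then C is a subring of R isomorphic to k[X], the ideal P = k[X] × {0} is a minimal prime of R, and P ∩ C = {(f, f(1)) : f(1) = 0} is a maximal ideal of C of height 1; in particular the inequality ht(P ∩ C) ≥ ht(P) can be strict, and R is not a projective C-module. -/

import Mathlib

/-- Height of an element `P` in a poset with respect to a predicate (`prime`):
the supremum of lengths of strictly increasing chains of elements satisfying the
predicate and ending at `P`. -/
noncomputable def primeChainHeight {α : Type*} [Preorder α] (isP : α → Prop) (P : α) : ℕ∞ :=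
  sSup {n : ℕ∞ | ∃ m : ℕ, n = (m : ℕ∞) ∧ ∃ f : Fin (m + 1) → α,
    StrictMono f ∧ (∀ i, isP (f i)) ∧ f (Fin.last m) = P}

/-- Height of an ideal of a commutative ring. -/
noncomputable def cHeight {C : Type*} [CommRing C] (p : Ideal C) : ℕ∞ :=
  primeChainHeight Ideal.IsPrime p

variable (k : Type*) [Field k]

/-- The embedding `k[X] → k[X] × k`, `f ↦ (f, f(1))`, whose image is the subring `C`. -/
noncomputable def cEmb : Polynomial k →+* Polynomial k × k :=
  (RingHom.id (Polynomial k)).prod (Polynomial.evalRingHom (1 : k))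

open Polynomial in
lemma cEmb_apply (f : Polynomial k) : cEmb k f = (f, eval 1 f) := rfl

open Polynomial in
/-- In a PID, a prime strictly below a prime is the zero ideal. -/
lemma prime_lt_eq_bot {p q : Ideal (Polynomial k)} (hp : p.IsPrime) (hq : q.IsPrime)
    (h : p < q) : p = ⊥ := by
  by_contra h0
  haveI := hp
  exact h.ne ((IsPrime.to_maximal_ideal h0).eq_of_le hq.ne_top h.le)

open Polynomial in
lemma ker_eval_ne_bot : RingHom.ker (evalRingHom (1 : k)) ≠ ⊥ := by
  intro h
  have hx : (X - C 1 : Polynomial k) ∈ RingHom.ker (evalRingHom (1 : k)) := by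
    simp [RingHom.mem_ker]
  rw [h, Ideal.mem_bot] at hx
  exact X_sub_C_ne_zero (1 : k) hx

open Polynomial in
lemma minimal_prime_aux : Ideal.prod (⊤ : Ideal (Polynomial k)) (⊥ : Ideal k) ∈
    minimalPrimes (Polynomial k × k) := by
  haveI : (⊥ : Ideal k).IsPrime := Ideal.bot_prime
  refine ⟨⟨Ideal.isPrime_ideal_prod_top', bot_le⟩, ?_⟩
  rintro Q ⟨hQ, -⟩ hle
  rcases (Ideal.ideal_prod_prime Q).1 hQ with ⟨p, hp, rfl⟩ | ⟨p, hp, rfl⟩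
  · exfalso
    have h01 : ((0 : Polynomial k), (1 : k)) ∈ Ideal.prod p ⊤ :=
      (Ideal.mem_prod _ _).2 ⟨p.zero_mem, trivial⟩
    have := ((Ideal.mem_prod _ _).1 (hle h01)).2
    rw [Ideal.mem_bot] at this
    exact one_ne_zero this
  · rintro ⟨r, s⟩ hrs
    obtain ⟨-, hs⟩ := (Ideal.mem_prod _ _).1 hrs
    rw [Ideal.mem_bot] at hs
    subst hs
    exact (Ideal.mem_prod _ _).2 ⟨trivial, p.zero_mem⟩

open Polynomial in
theorem product_ring_example :
    Function.Injective (cEmb k) ∧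
    (letI := (cEmb k).toAlgebra; Module.Finite (Polynomial k) (Polynomial k × k)) ∧
    (Ideal.prod (⊤ : Ideal (Polynomial k)) (⊥ : Ideal k)).IsPrime ∧
    Ideal.prod (⊤ : Ideal (Polynomial k)) (⊥ : Ideal k) ∈ minimalPrimes (Polynomial k × k) ∧
    Ideal.comap (cEmb k) (Ideal.prod (⊤ : Ideal (Polynomial k)) (⊥ : Ideal k)) =
      RingHom.ker (Polynomial.evalRingHom (1 : k)) ∧
    (Ideal.comap (cEmb k) (Ideal.prod (⊤ : Ideal (Polynomial k)) (⊥ : Ideal k))).IsMaximal ∧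
    cHeight (Ideal.comap (cEmb k) (Ideal.prod (⊤ : Ideal (Polynomial k)) (⊥ : Ideal k))) = 1 ∧
    cHeight (Ideal.prod (⊤ : Ideal (Polynomial k)) (⊥ : Ideal k)) = 0 ∧
    ¬ (letI := (cEmb k).toAlgebra; Module.Projective (Polynomial k) (Polynomial k × k)) := by
  classical
  haveI : (⊥ : Ideal k).IsPrime := Ideal.bot_prime
  have hcomap : Ideal.comap (cEmb k) (Ideal.prod (⊤ : Ideal (Polynomial k)) (⊥ : Ideal k)) =
      RingHom.ker (Polynomial.evalRingHom (1 : k)) := by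
    ext f
    simp only [Ideal.mem_comap, cEmb_apply, Ideal.mem_prod, RingHom.mem_ker, Ideal.mem_bot, Submodule.mem_top, true_and, coe_evalRingHom]
  have hsurj : Function.Surjective (evalRingHom (1 : k)) := fun a => ⟨C a, eval_C⟩
  have hmax : (RingHom.ker (Polynomial.evalRingHom (1 : k))).IsMaximal :=
    RingHom.ker_isMaximal_of_surjective _ hsurj
  refine ⟨?_, ?_, Ideal.isPrime_ideal_prod_top', minimal_prime_aux k, hcomap,
    hcomap ▸ hmax, ?_, ?_, ?_⟩
  · -- injectivity
    intro f g h
    exact congrArg Prod.fst h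
  · -- finiteness
    letI := (cEmb k).toAlgebra
    refine ⟨⟨{(1, 1), (0, 1)}, ?_⟩⟩
    rw [eq_top_iff]
    rintro ⟨f, a⟩ -
    have key : ((f, a) : Polynomial k × k) =
        f • ((1, 1) : Polynomial k × k) + (C (a - eval 1 f)) • ((0, 1) : Polynomial k × k) := by
      simp [Algebra.smul_def, RingHom.algebraMap_toAlgebra, cEmb_apply, Prod.ext_iff]
    rw [key]
    exact Submodule.add_mem _
      (Submodule.smul_mem _ _ (Submodule.subset_span (by simp)))
      (Submodule.smul_mem _ _ (Submodule.subset_span (by simp)))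
  · -- height of P ∩ C equals 1
    rw [hcomap]
    refine le_antisymm (sSup_le ?_) (le_sSup ?_)
    · rintro n ⟨m, rfl, f, hmono, hprime, hlast⟩
      have hm : m ≤ 1 := by
        by_contra hm
        push_neg at hm
        have h01 : f ⟨0, by omega⟩ < f ⟨1, by omega⟩ := hmono (by simp [Fin.lt_def])
        have h12 : f ⟨1, by omega⟩ < f ⟨2, by omega⟩ := hmono (by simp [Fin.lt_def])
        have e0 := prime_lt_eq_bot k (hprime _) (hprime _) h01
        have e1 := prime_lt_eq_bot k (hprime _) (hprime _) h12
        rw [e0, e1] at h01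
        exact lt_irrefl _ h01
      exact_mod_cast hm
    · refine ⟨1, rfl, ![⊥, RingHom.ker (Polynomial.evalRingHom (1 : k))], ?_, ?_, rfl⟩
      · intro i j hij
        fin_cases i <;> fin_cases j <;>
          simp [Fin.lt_def, bot_lt_iff_ne_bot, Ne, ker_eval_ne_bot k] at hij ⊢
      · intro i
        fin_cases i
        · exact Ideal.bot_prime
        · exact hmax.isPrime
  · -- height of P equals 0
    refine le_antisymm (sSup_le ?_) (le_sSup ⟨0, rfl, fun _ => _, ?_, ?_, rfl⟩)
    · rintro n ⟨m, rfl, f, hmono, hprime, hlast⟩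
      have hm : m = 0 := by
        by_contra hm
        have h0 : f 0 < f (Fin.last m) := hmono (by
          simp [Fin.lt_def, Fin.last]; omega)
        rw [hlast] at h0
        have := (minimal_prime_aux k).2 ⟨hprime 0, bot_le⟩ h0.le
        exact h0.not_ge this
      simp [hm]
    · intro i j hij
      fin_cases i; fin_cases j; simp at hij
    · exact fun _ => Ideal.isPrime_ideal_prod_top'
  · -- not projective
    intro hproj
    letI := (cEmb k).toAlgebra
    obtain ⟨s, hs⟩ := hproj.out
    have h1 : (X - C 1 : Polynomial k) • ((0, 1) : Polynomial k × k) = 0 := by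
      simp [Algebra.smul_def, RingHom.algebraMap_toAlgebra, cEmb_apply, Prod.ext_iff]
    have h2 : s ((0 : Polynomial k), (1 : k)) = 0 := by
      have h3 := congrArg s h1
      rw [map_smul, map_zero] at h3
      rcases smul_eq_zero.mp h3 with h | h
      · exact absurd h (X_sub_C_ne_zero (1 : k))
      · exact h
    have h4 := hs ((0 : Polynomial k), (1 : k))
    rw [h2, map_zero] at h4
    exact one_ne_zero (congrArg Prod.snd h4).symm
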